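/- arXiv:1108.3602 — 2 statements merged into one kernel-verified Lean document; each statement's English description precedes it below -/
import Mathlib

section
/- Let W be a standard one-dimensional Brownian motion, T>0, f:ℝ→ℝ bounded continuous with modulus of continuity osc_f, n_ε a positive integer with δ_ε = T/n_ε, s_i = i δ_ε, q_ε = 2√(δ_ε |log δ_ε|), and for t ∈ [0,T] let i(t) = min{j ∈ [0,n_ε]∩ℤ : s_j ≥ t} and L_{ε,P_ε}(t) = Σ_{i=1}^{i(t)} (f(εW(s_i)) − f(εW(s_{i−1})))(W(s_i) − W(s_{i−1})). Then there exists a constant K_2 > 0 such that for any δ > 0 and ε > 0, P{ sup_{t∈[0,T]} |L_{ε,P_ε}(t)| > δ } ≤ P{ |log δ_ε| · osc_f(ε q_ε) > q_ε δ/(4T) } + K_2 δ_ε, where the first probability on the right-hand side equals 0 or 1 according to whether the deterministic inequality holds. -/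
open MeasureTheory ProbabilityTheory Filter Topology
open scoped NNReal ENNReal

noncomputable section

/-- A finite partition of the interval `[a, b]`. -/
structure IntervalPartition (a b : ℝ) where
  n : ℕ
  npos : 0 < n
  u : ℕ → ℝ
  left : u 0 = a
  right : u n = b
  mono : ∀ i, i < n → u i ≤ u (i + 1)

/-- The mesh of a partition. -/
def IntervalPartition.mesh {a b : ℝ} (π : IntervalPartition a b) : ℝ :=
  ⨆ i : Fin π.n, (π.u (i + 1) - π.u i)

/-- The sum of products of increments of `X` and `Y` along a partition. -/
def covSum {Ω : Type*} {a b : ℝ} (X Y : ℝ → Ω → ℝ) (π : IntervalPartition a b) (ω : Ω) : ℝ :=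
  ∑ i ∈ Finset.range π.n,
    (X (π.u (i + 1)) ω - X (π.u i) ω) * (Y (π.u (i + 1)) ω - Y (π.u i) ω)

/-- Left-endpoint Riemann sum of `X` against the increments of `Y` along a partition. -/
def itoSum {Ω : Type*} {a b : ℝ} (X Y : ℝ → Ω → ℝ) (π : IntervalPartition a b) (ω : Ω) : ℝ :=
  ∑ i ∈ Finset.range π.n, X (π.u i) ω * (Y (π.u (i + 1)) ω - Y (π.u i) ω)

/-- `Q` is the quadratic covariation `[X, Y]` on `[a, b]`: the limit in probability of the
sums of products of increments along any sequence of partitions with mesh tending to `0`. -/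
def IsQuadCovar {Ω : Type*} [MeasurableSpace Ω] (P : Measure Ω)
    (X Y : ℝ → Ω → ℝ) (a b : ℝ) (Q : Ω → ℝ) : Prop :=
  ∀ π : ℕ → IntervalPartition a b,
    Tendsto (fun k => (π k).mesh) atTop (𝓝 0) →
      TendstoInMeasure P (fun k => covSum X Y (π k)) atTop Q

/-- `I` is the Itô integral `∫_a^b X dY`: the limit in probability of left-endpoint Riemann
sums along any sequence of partitions with mesh tending to `0`. -/
def IsItoIntegral {Ω : Type*} [MeasurableSpace Ω] (P : Measure Ω)
    (X Y : ℝ → Ω → ℝ) (a b : ℝ) (I : Ω → ℝ) : Prop :=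
  ∀ π : ℕ → IntervalPartition a b,
    Tendsto (fun k => (π k).mesh) atTop (𝓝 0) →
      TendstoInMeasure P (fun k => itoSum X Y (π k)) atTop I

/-- Modulus of continuity of `f`. -/
def osc (f : ℝ → ℝ) (δ : ℝ) : ℝ :=
  sSup {y | ∃ s t : ℝ, |s - t| < δ ∧ y = |f s - f t|}

/-- `W` is a standard one-dimensional Brownian motion under `P`. -/
def IsBrownianMotion {Ω : Type*} [MeasurableSpace Ω] (P : Measure Ω)
    (W : ℝ → Ω → ℝ) : Prop :=
  (∀ t : ℝ, Measurable (W t)) ∧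
  (∀ ω, W 0 ω = 0) ∧
  (∀ ω, Continuous fun t => W t ω) ∧
  (∀ s t : ℝ, 0 ≤ s → s ≤ t →
    Measure.map (fun ω => W t ω - W s ω) P = gaussianReal 0 (t - s).toNNReal) ∧
  (∀ s t : ℝ, 0 ≤ s → s ≤ t →
    Indep (MeasurableSpace.comap (fun ω => W t ω - W s ω) inferInstance)
      (⨆ u ∈ Set.Icc (0:ℝ) s, MeasurableSpace.comap (W u) inferInstance) P)

/-- `B` is a Brownian motion on `[0, T]` with respect to the filtration `F` under `P`. -/
def IsBMWithRespectTo {Ω : Type*} [MeasurableSpace Ω] (P : Measure Ω) (T : ℝ)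
    (F : ℝ → MeasurableSpace Ω) (B : ℝ → Ω → ℝ) : Prop :=
  (∀ t ∈ Set.Icc (0:ℝ) T, @Measurable Ω ℝ (F t) _ (B t)) ∧
  (∀ ω, B 0 ω = 0) ∧
  (∀ ω, ContinuousOn (fun t => B t ω) (Set.Icc 0 T)) ∧
  (∀ s t : ℝ, 0 ≤ s → s ≤ t → t ≤ T →
    Measure.map (fun ω => B t ω - B s ω) P = gaussianReal 0 (t - s).toNNReal) ∧
  (∀ s t : ℝ, 0 ≤ s → s ≤ t → t ≤ T →
    Indep (MeasurableSpace.comap (fun ω => B t ω - B s ω) inferInstance) (F s) P)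


/-- `i(t) = min {j ∈ [0, nε] ∩ ℤ : j·δε ≥ t}`. -/
def iOf (nε : ℕ) (δε t : ℝ) : ℕ :=
  sInf {j : ℕ | j ≤ nε ∧ t ≤ (j : ℝ) * δε}

/-- The approximating sum
`L_{ε,P_ε}(t) = Σ_{i=1}^{i(t)} (f(εW(s_i)) - f(εW(s_{i-1})))(W(s_i) - W(s_{i-1}))`
along the uniform partition `s_i = i·δε`. -/
def LP {Ω : Type*} (f : ℝ → ℝ) (W : ℝ → Ω → ℝ) (ε : ℝ) (nε : ℕ) (δε t : ℝ) (ω : Ω) : ℝ :=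
  ∑ i ∈ Finset.range (iOf nε δε t),
    (f (ε * W (((i : ℝ) + 1) * δε) ω) - f (ε * W ((i : ℝ) * δε) ω)) *
      (W (((i : ℝ) + 1) * δε) ω - W ((i : ℝ) * δε) ω)


section AuxLemmas

open Real
open scoped NNReal ENNReal

lemma gauss_mgf_lintegral (v : ℝ≥0) (hv : v ≠ 0) (t : ℝ) :
    ∫⁻ x, ENNReal.ofReal (rexp (t * x)) * gaussianPDF 0 v x
      = ENNReal.ofReal (rexp ((v:ℝ) * t^2 / 2)) := by
  have hvpos : (0:ℝ) < v := by exact_mod_cast pos_iff_ne_zero.mpr hv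
  have key : ∀ x, rexp (t*x) * gaussianPDFReal 0 v x
      = rexp ((v:ℝ)*t^2/2) * gaussianPDFReal (t*v) v x := by
    intro x
    simp only [gaussianPDFReal]
    rw [mul_left_comm, mul_left_comm (rexp ((v:ℝ)*t^2/2)), ← Real.exp_add, ← Real.exp_add]
    congr 2
    field_simp
    ring
  calc ∫⁻ x, ENNReal.ofReal (rexp (t*x)) * gaussianPDF 0 v x
      = ∫⁻ x, ENNReal.ofReal (rexp ((v:ℝ)*t^2/2)) * gaussianPDF (t*v) v x := by
        refine lintegral_congr fun x => ?_
        rw [gaussianPDF, gaussianPDF, ← ENNReal.ofReal_mul (Real.exp_pos _).le,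
          ← ENNReal.ofReal_mul (Real.exp_pos _).le, key]
    _ = ENNReal.ofReal (rexp ((v:ℝ)*t^2/2)) * ∫⁻ x, gaussianPDF (t*v) v x :=
        lintegral_const_mul _ (measurable_gaussianPDF _ _)
    _ = _ := by rw [lintegral_gaussianPDF_eq_one _ hv, mul_one]

lemma gauss_upper (v : ℝ≥0) (hv : v ≠ 0) {a : ℝ} (ha : 0 ≤ a) :
    gaussianReal 0 v {x | a ≤ x} ≤ ENNReal.ofReal (rexp (-a^2/(2*(v:ℝ)))) := by
  have hvpos : (0:ℝ) < v := by exact_mod_cast pos_iff_ne_zero.mpr hv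
  set t : ℝ := a / (v:ℝ) with ht
  have htnn : 0 ≤ t := div_nonneg ha hvpos.le
  calc gaussianReal 0 v {x | a ≤ x}
      = ∫⁻ x in {x | a ≤ x}, gaussianPDF 0 v x := gaussianReal_apply 0 hv _
    _ ≤ ∫⁻ x in {x | a ≤ x}, ENNReal.ofReal (rexp (t*(x-a))) * gaussianPDF 0 v x := by
        refine setLIntegral_mono' (measurableSet_le measurable_const measurable_id) fun x hx => ?_
        conv_lhs => rw [← one_mul (gaussianPDF 0 v x)]
        gcongr
        rw [show (1:ℝ≥0∞) = ENNReal.ofReal 1 by simp]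
        exact ENNReal.ofReal_le_ofReal
          (Real.one_le_exp (mul_nonneg htnn (sub_nonneg.2 hx)))
    _ ≤ ∫⁻ x, ENNReal.ofReal (rexp (t*(x-a))) * gaussianPDF 0 v x :=
        setLIntegral_le_lintegral _ _
    _ = ENNReal.ofReal (rexp (-(t*a))) * ∫⁻ x, ENNReal.ofReal (rexp (t*x)) * gaussianPDF 0 v x := by
        rw [← lintegral_const_mul _ (by
          exact (ENNReal.measurable_ofReal.comp (Real.measurable_exp.comp
            (measurable_id.const_mul t))).mul (measurable_gaussianPDF _ _))]
        refine lintegral_congr fun x => ?_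
        rw [← mul_assoc, ← ENNReal.ofReal_mul (Real.exp_pos _).le, ← Real.exp_add]
        congr 2
        ring
    _ = ENNReal.ofReal (rexp (-(t*a))) * ENNReal.ofReal (rexp ((v:ℝ)*t^2/2)) := by
        rw [gauss_mgf_lintegral v hv t]
    _ = ENNReal.ofReal (rexp (-a^2/(2*(v:ℝ)))) := by
        rw [← ENNReal.ofReal_mul (Real.exp_pos _).le, ← Real.exp_add]
        congr 2
        field_simp [ht]
        have key : t * (v:ℝ) = a := by rw [ht]; exact div_mul_cancel₀ a hvpos.ne'
        linear_combination (t * (v:ℝ) - a) * key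

lemma gauss_abs (v : ℝ≥0) {a : ℝ} (ha : 0 < a) :
    gaussianReal 0 v {x | a ≤ |x|} ≤ ENNReal.ofReal (2 * rexp (-a^2/(2*(v:ℝ)))) := by
  by_cases hv : v = 0
  · subst hv
    rw [gaussianReal_zero_var,
      Measure.dirac_apply' _ ((measurableSet_le measurable_const measurable_abs))]
    have : (0:ℝ) ∉ {x : ℝ | a ≤ |x|} := by simp [ha.not_ge, abs_of_nonneg]
    rw [Set.indicator_of_notMem this]
    positivity
  · have hsub : {x : ℝ | a ≤ |x|} ⊆ {x : ℝ | a ≤ x} ∪ {x : ℝ | x ≤ -a} := by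
      intro x hx
      rcases abs_cases x with ⟨h1, _⟩ | ⟨h1, _⟩
      · exact Or.inl (by simpa [h1] using hx)
      · exact Or.inr (by simp only [Set.mem_setOf_eq] at hx ⊢; linarith [hx.trans_eq h1])
    have hneg : gaussianReal 0 v {x : ℝ | x ≤ -a} ≤ ENNReal.ofReal (rexp (-a^2/(2*(v:ℝ)))) := by
      have hmap : (gaussianReal 0 v).map ((-1 : ℝ) * ·) = gaussianReal 0 v := by
        rw [gaussianReal_map_const_mul (-1 : ℝ)]
        norm_num
      have hset : {x : ℝ | x ≤ -a} = ((-1 : ℝ) * ·) ⁻¹' {x : ℝ | a ≤ x} := by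
        ext x; simp; constructor <;> intro h <;> linarith
      rw [hset, ← Measure.map_apply (measurable_id'.const_mul _)
        (measurableSet_le measurable_const measurable_id'), hmap]
      exact gauss_upper v hv ha.le
    calc gaussianReal 0 v {x | a ≤ |x|}
        ≤ gaussianReal 0 v {x : ℝ | a ≤ x} + gaussianReal 0 v {x : ℝ | x ≤ -a} :=
          (measure_mono hsub).trans (measure_union_le _ _)
      _ ≤ ENNReal.ofReal (rexp (-a^2/(2*(v:ℝ)))) + ENNReal.ofReal (rexp (-a^2/(2*(v:ℝ)))) :=
          add_le_add (gauss_upper v hv ha.le) hneg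
      _ = ENNReal.ofReal (2 * rexp (-a^2/(2*(v:ℝ)))) := by
          rw [← ENNReal.ofReal_add (Real.exp_pos _).le (Real.exp_pos _).le]
          ring_nf

lemma osc_bddAbove {f : ℝ → ℝ} {M : ℝ} (hM : ∀ x, |f x| ≤ M) (d : ℝ) :
    BddAbove {y | ∃ s t : ℝ, |s - t| < d ∧ y = |f s - f t|} := by
  refine ⟨2 * M, fun y hy => ?_⟩
  obtain ⟨s, t, -, rfl⟩ := hy
  calc |f s - f t| ≤ |f s| + |f t| := abs_sub _ _
    _ ≤ 2 * M := by linarith [hM s, hM t]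

lemma abs_sub_le_osc {f : ℝ → ℝ} {M : ℝ} (hM : ∀ x, |f x| ≤ M) {d s t : ℝ}
    (h : |s - t| < d) : |f s - f t| ≤ osc f d :=
  le_csSup (osc_bddAbove hM d) ⟨s, t, h, rfl⟩

lemma osc_nonneg {f : ℝ → ℝ} {M : ℝ} (hM : ∀ x, |f x| ≤ M) {d : ℝ} (hd : 0 < d) :
    0 ≤ osc f d := by
  have := abs_sub_le_osc hM (s := 0) (t := 0) (by simpa using hd)
  simpa using (abs_nonneg (f 0 - f 0)).trans this

end AuxLemmas

/-- Lemma 3 of the paper. -/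
theorem approximating_sum_tail_estimate
    {Ω : Type*} [MeasurableSpace Ω] (P : Measure Ω) [IsProbabilityMeasure P]
    (W : ℝ → Ω → ℝ) (hW : IsBrownianMotion P W)
    (T : ℝ) (hT : 0 < T)
    (f : ℝ → ℝ) (hfb : ∃ M : ℝ, ∀ x, |f x| ≤ M) (hfc : Continuous f)
    (n : ℝ → ℕ) (hn : ∀ ε > 0, 0 < n ε) :
    ∃ K₂ > 0, ∀ ε > 0, ∀ δ > 0,
      P {ω | (⨆ t : Set.Icc (0:ℝ) T, |LP f W ε (n ε) (T / n ε) t ω|) > δ}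
        ≤ P {_ω : Ω | |Real.log (T / n ε)| *
              osc f (ε * (2 * Real.sqrt ((T / n ε) * |Real.log (T / n ε)|)))
            > (2 * Real.sqrt ((T / n ε) * |Real.log (T / n ε)|)) * δ / (4 * T)}
          + ENNReal.ofReal (K₂ * (T / n ε)) := by
  refine ⟨2 * T + 1, by linarith, ?_⟩
  intro ε hε δ hδ
  obtain ⟨M, hM⟩ := hfb
  have hNpos : 0 < n ε := hn ε hε
  set N := n ε with hN
  have hNR : (0:ℝ) < (N:ℝ) := Nat.cast_pos.mpr hNpos
  set Δ : ℝ := T / (N:ℝ) with hΔdef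
  have hΔpos : 0 < Δ := div_pos hT hNR
  have hNΔ : (N:ℝ) * Δ = T := by rw [hΔdef]; field_simp [hNR.ne']
  set q : ℝ := 2 * Real.sqrt (Δ * |Real.log Δ|) with hqdef
  by_cases hdet : |Real.log Δ| * osc f (ε * q) > q * δ / (4 * T)
  · have huniv : {_ω : Ω | |Real.log Δ| * osc f (ε * q) > q * δ / (4 * T)} = Set.univ :=
      Set.eq_univ_of_forall fun _ => hdet
    rw [huniv, measure_univ]
    exact (prob_le_one).trans le_self_add
  push_neg at hdet
  have hdet' : |Real.log Δ| * osc f (ε * q) * (4 * T) ≤ q * δ :=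
    (le_div_iff₀ (by positivity : (0:ℝ) < 4 * T)).1 hdet
  by_cases hΔ1 : 1 ≤ Δ
  · refine (prob_le_one).trans ?_
    calc (1:ℝ≥0∞) = ENNReal.ofReal 1 := by simp
      _ ≤ ENNReal.ofReal ((2 * T + 1) * Δ) := ENNReal.ofReal_le_ofReal (by nlinarith)
      _ ≤ _ := self_le_add_left _ _
  · have hΔlt : Δ < 1 := not_le.1 hΔ1
    have hlogneg : Real.log Δ < 0 := Real.log_neg hΔpos hΔlt
    have hLpos : 0 < |Real.log Δ| := abs_pos.2 hlogneg.ne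
    have hqpos : 0 < q := by
      have := Real.sqrt_pos.2 (mul_pos hΔpos hLpos)
      rw [hqdef]; linarith
    have hq2 : q ^ 2 = 4 * (Δ * |Real.log Δ|) := by
      rw [hqdef, mul_pow, Real.sq_sqrt (by positivity)]; ring
    have hosc0 : 0 ≤ osc f (ε * q) := osc_nonneg hM (mul_pos hε hqpos)
    set A : ℕ → Set Ω := fun i => {ω | q ≤ |W (((i:ℝ)+1)*Δ) ω - W ((i:ℝ)*Δ) ω|} with hA
    have hsub : {ω | (⨆ t : Set.Icc (0:ℝ) T, |LP f W ε N Δ t ω|) > δ}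
        ⊆ ⋃ i ∈ Finset.range N, A i := by
      intro ω hω
      by_contra hmem
      have hall : ∀ i, i < N → |W (((i:ℝ)+1)*Δ) ω - W ((i:ℝ)*Δ) ω| < q := by
        intro i hi
        by_contra h
        push_neg at h
        exact hmem (Set.mem_biUnion (Finset.mem_range.2 hi) h)
      have hbound : ∀ t : Set.Icc (0:ℝ) T, |LP f W ε N Δ (t:ℝ) ω| ≤ δ := by
        intro t
        have hiOf : iOf N Δ (t:ℝ) ≤ N := Nat.sInf_le ⟨le_rfl, by rw [hNΔ]; exact t.2.2⟩
        calc |LP f W ε N Δ (t:ℝ) ω|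
            ≤ ∑ i ∈ Finset.range (iOf N Δ (t:ℝ)),
                |(f (ε * W (((i:ℝ)+1)*Δ) ω) - f (ε * W ((i:ℝ)*Δ) ω)) *
                  (W (((i:ℝ)+1)*Δ) ω - W ((i:ℝ)*Δ) ω)| := Finset.abs_sum_le_sum_abs _ _
          _ ≤ ∑ _i ∈ Finset.range (iOf N Δ (t:ℝ)), osc f (ε * q) * q := by
              refine Finset.sum_le_sum fun i hi => ?_
              have hiN : i < N := lt_of_lt_of_le (Finset.mem_range.1 hi) hiOf
              have hinc := hall i hiN
              rw [abs_mul]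
              refine mul_le_mul ?_ hinc.le (abs_nonneg _) hosc0
              refine abs_sub_le_osc hM ?_
              have heq : ε * W (((i:ℝ)+1)*Δ) ω - ε * W ((i:ℝ)*Δ) ω
                  = ε * (W (((i:ℝ)+1)*Δ) ω - W ((i:ℝ)*Δ) ω) := by ring
              rw [heq, abs_mul, abs_of_pos hε]
              exact mul_lt_mul_of_pos_left hinc hε
          _ = (iOf N Δ (t:ℝ) : ℝ) * (osc f (ε * q) * q) := by
              rw [Finset.sum_const, Finset.card_range, nsmul_eq_mul]
          _ ≤ (N:ℝ) * (osc f (ε * q) * q) := by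
              have hc : (iOf N Δ (t:ℝ) : ℝ) ≤ (N:ℝ) := Nat.cast_le.2 hiOf
              exact mul_le_mul_of_nonneg_right hc (mul_nonneg hosc0 hqpos.le)
          _ ≤ δ := by
              have h1 : T * (q * q) * osc f (ε * q) ≤ Δ * (q * δ) := by
                have e : T * (q * q) * osc f (ε * q)
                    = Δ * (|Real.log Δ| * osc f (ε * q) * (4 * T)) := by
                  rw [show q * q = q ^ 2 by ring, hq2]; ring
                rw [e]
                exact mul_le_mul_of_nonneg_left hdet' hΔpos.le
              have h2 : T * q * osc f (ε * q) ≤ Δ * δ := by nlinarith [hqpos, h1]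
              refine le_of_mul_le_mul_right ?_ hΔpos
              calc (N:ℝ) * (osc f (ε * q) * q) * Δ = T * q * osc f (ε * q) := by
                    rw [← hNΔ]; ring
                _ ≤ Δ * δ := h2
                _ = δ * Δ := by ring
      haveI : Nonempty (Set.Icc (0:ℝ) T) := ⟨⟨0, Set.left_mem_Icc.2 hT.le⟩⟩
      exact absurd hω (not_lt.2 (ciSup_le hbound))
    have hAi : ∀ i ∈ Finset.range N, P (A i) ≤ ENNReal.ofReal (2 * Δ ^ 2) := by
      intro i _
      have h0s : (0:ℝ) ≤ (i:ℝ) * Δ := by positivity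
      have hst : (i:ℝ) * Δ ≤ ((i:ℝ)+1) * Δ := by nlinarith
      have hmap := hW.2.2.2.1 _ _ h0s hst
      rw [show ((i:ℝ)+1) * Δ - (i:ℝ) * Δ = Δ by ring] at hmap
      have hpre : A i = (fun ω => W (((i:ℝ)+1)*Δ) ω - W ((i:ℝ)*Δ) ω) ⁻¹' {x | q ≤ |x|} := rfl
      rw [hpre, ← Measure.map_apply (f := fun ω => W (((i:ℝ)+1)*Δ) ω - W ((i:ℝ)*Δ) ω) ((hW.1 _).sub (hW.1 _))
        (measurableSet_le measurable_const measurable_abs), hmap]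
      refine (gauss_abs _ hqpos).trans (ENNReal.ofReal_le_ofReal ?_)
      rw [Real.coe_toNNReal _ hΔpos.le]
      have hexp : -q ^ 2 / (2 * Δ) = Real.log Δ + Real.log Δ := by
        rw [hq2, abs_of_neg hlogneg]; field_simp; ring
      rw [hexp, Real.exp_add, Real.exp_log hΔpos]
      nlinarith [hΔpos]
    calc P {ω | (⨆ t : Set.Icc (0:ℝ) T, |LP f W ε N Δ t ω|) > δ}
        ≤ P (⋃ i ∈ Finset.range N, A i) := measure_mono hsub
      _ ≤ ∑ i ∈ Finset.range N, P (A i) := measure_biUnion_finset_le _ _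
      _ ≤ ∑ _i ∈ Finset.range N, ENNReal.ofReal (2 * Δ ^ 2) := Finset.sum_le_sum hAi
      _ = (N : ℝ≥0∞) * ENNReal.ofReal (2 * Δ ^ 2) := by
          rw [Finset.sum_const, Finset.card_range, nsmul_eq_mul]
      _ ≤ ENNReal.ofReal ((2 * T + 1) * Δ) := by
          rw [show ((N:ℕ) : ℝ≥0∞) = ENNReal.ofReal (N:ℝ) by simp,
            ← ENNReal.ofReal_mul hNR.le]
          refine ENNReal.ofReal_le_ofReal ?_
          have hNΔ2 : (N:ℝ) * Δ * Δ = T * Δ := by rw [hNΔ]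
          nlinarith [hΔpos, hNΔ2]
      _ ≤ _ := self_le_add_left _ _

end
end

section
/- Let W be a standard one-dimensional Brownian motion, T>0, Ŵ(t) = W(T−t), and let β be the Brownian motion β(t) = Ŵ(t) − W(T) + ∫_0^t Ŵ(s)/(T−s) ds with respect to the enlarged filtration H. Then for all t ∈ [0,T], Ŵ(t) = W(T)(1 − t/T) + (T−t) ∫_0^t (T−s)^{−1} dβ(s); that is, the variation-of-constants formula X(t) = ξ(1 − t/T) + (T−t)∫_0^t (T−s)^{−1} dβ(s) furnishes the unique solution of dX(t) = −X(t)/(T−t) dt + dβ(t), X(0) = ξ = W(T). -/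
open MeasureTheory ProbabilityTheory Filter Topology

noncomputable section

namespace IntervalPartition

variable {a b : ℝ} (π : IntervalPartition a b)

lemma u_mono : ∀ i j, i ≤ j → j ≤ π.n → π.u i ≤ π.u j := by
  intro i j hij hjn
  induction j with
  | zero => simp_all
  | succ k ih =>
    rcases Nat.eq_or_lt_of_le hij with h | h
    · exact le_of_eq (by rw [h])
    · exact (ih (Nat.lt_succ_iff.mp h) (le_trans (Nat.le_succ k) hjn)).trans
        (π.mono k (Nat.lt_of_succ_le hjn))

lemma u_mem {t : ℝ} (π : IntervalPartition 0 t) {i : ℕ} (hi : i ≤ π.n) : π.u i ∈ Set.Icc (0:ℝ) t := by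
  have h0 := π.u_mono 0 i (Nat.zero_le i) hi
  have h1 := π.u_mono i π.n hi le_rfl
  rw [π.left] at h0; rw [π.right] at h1
  exact ⟨h0, h1⟩

lemma diff_le_mesh {i : ℕ} (hi : i < π.n) : π.u (i + 1) - π.u i ≤ π.mesh := by
  exact le_ciSup (f := fun j : Fin π.n => π.u (j + 1) - π.u j)
    (Set.Finite.bddAbove (Set.finite_range _)) ⟨i, hi⟩

lemma mesh_nonneg : 0 ≤ π.mesh := by
  have h : (0:ℝ) < π.n := by exact_mod_cast π.npos
  refine le_trans ?_ (π.diff_le_mesh π.npos)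
  linarith [π.mono 0 π.npos]

end IntervalPartition

open Set in
lemma tendstoInMeasure_unique {Ω : Type*} [MeasurableSpace Ω] {P : Measure Ω}
    {f : ℕ → Ω → ℝ} {g h : Ω → ℝ}
    (hg : TendstoInMeasure P f atTop g) (hh : TendstoInMeasure P f atTop h) :
    g =ᵐ[P] h := by
  have key : ∀ n : ℕ, P {x | 1/(n+1 : ℝ) ≤ dist (g x) (h x)} = 0 := by
    intro n
    set ε : ℝ := 1/(2*(n+1)) with hε
    have hεpos : 0 < ε := by positivity
    have hsub : ∀ k, {x | 1/(n+1 : ℝ) ≤ dist (g x) (h x)} ⊆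
        {x | ε ≤ dist (f k x) (g x)} ∪ {x | ε ≤ dist (f k x) (h x)} := by
      intro k x hx
      by_contra hc
      simp only [mem_union, mem_setOf_eq, not_or, not_le] at hc
      have := dist_triangle (g x) (f k x) (h x)
      rw [dist_comm (g x) (f k x)] at this
      simp only [mem_setOf_eq] at hx
      have : dist (g x) (h x) < 2 * ε := by linarith [hc.1, hc.2]
      rw [hε] at this
      have h2 : (2:ℝ) * (1/(2*(n+1))) = 1/(n+1) := by field_simp
      rw [h2] at this
      linarith
    have hle : ∀ k, P {x | 1/(n+1 : ℝ) ≤ dist (g x) (h x)} ≤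
        P {x | ε ≤ dist (f k x) (g x)} + P {x | ε ≤ dist (f k x) (h x)} := fun k =>
      le_trans (measure_mono (hsub k)) (measure_union_le _ _)
    have hlim : Tendsto (fun k => P {x | ε ≤ dist (f k x) (g x)} +
        P {x | ε ≤ dist (f k x) (h x)}) atTop (𝓝 0) := by
      simpa using (tendstoInMeasure_iff_dist.mp hg ε hεpos).add (tendstoInMeasure_iff_dist.mp hh ε hεpos)
    exact le_antisymm (ge_of_tendsto' hlim hle) zero_le
  have : P (⋃ n : ℕ, {x | 1/(n+1 : ℝ) ≤ dist (g x) (h x)}) = 0 :=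
    measure_iUnion_null key
  refine measure_mono_null ?_ this
  intro x hx
  simp only [mem_iUnion, mem_setOf_eq]
  have hd : 0 < dist (g x) (h x) := dist_pos.mpr hx
  obtain ⟨n, hn⟩ := exists_nat_one_div_lt hd
  exact ⟨n, le_of_lt hn⟩

open Set in
lemma riemann_close {t ε δ : ℝ} (g φ : ℝ → ℝ)
    (hg : ContinuousOn g (Icc 0 t)) (hφ : ContinuousOn φ (Icc 0 t))
    (hδ : 0 < δ)
    (hunif : ∀ x ∈ Icc (0:ℝ) t, ∀ y ∈ Icc (0:ℝ) t, dist x y < δ → |g x - g y| ≤ ε)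
    (π : IntervalPartition 0 t) (hmesh : π.mesh < δ)
    (v : ℕ → ℝ) (hv : ∀ i < π.n, v i ∈ Icc (π.u i) (π.u (i+1))) :
    |(∑ i ∈ Finset.range π.n, g (v i) * ∫ s in (π.u i)..(π.u (i+1)), φ s)
      - ∫ s in (0:ℝ)..t, g s * φ s| ≤ ε * ∫ s in (0:ℝ)..t, |φ s| := by
  have hIcc : ∀ i < π.n, Icc (π.u i) (π.u (i+1)) ⊆ Icc (0:ℝ) t := by
    intro i hi
    exact Icc_subset_Icc (π.u_mem hi.le).1 (π.u_mem hi).2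
  have huIcc : ∀ i < π.n, uIcc (π.u i) (π.u (i+1)) = Icc (π.u i) (π.u (i+1)) := by
    intro i hi; exact uIcc_of_le (π.mono i hi)
  have hφint : ∀ i < π.n, IntervalIntegrable φ volume (π.u i) (π.u (i+1)) := by
    intro i hi
    exact (hφ.mono (by rw [huIcc i hi]; exact hIcc i hi)).intervalIntegrable
  have hgφint : ∀ i < π.n, IntervalIntegrable (fun s => g s * φ s) volume (π.u i) (π.u (i+1)) := by
    intro i hi
    exact ((hg.mul hφ).mono (by rw [huIcc i hi]; exact hIcc i hi)).intervalIntegrable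
  have hsplit : ∫ s in (0:ℝ)..t, g s * φ s
      = ∑ i ∈ Finset.range π.n, ∫ s in (π.u i)..(π.u (i+1)), g s * φ s := by
    have h := intervalIntegral.sum_integral_adjacent_intervals
      (a := π.u) (n := π.n) (f := fun s => g s * φ s) (fun i hi => hgφint i hi)
    rw [π.left, π.right] at h
    exact h.symm
  have hsplitabs : ∫ s in (0:ℝ)..t, |φ s|
      = ∑ i ∈ Finset.range π.n, ∫ s in (π.u i)..(π.u (i+1)), |φ s| := by
    have h := intervalIntegral.sum_integral_adjacent_intervals
      (a := π.u) (n := π.n) (f := fun s => |φ s|) (fun i hi => (hφint i hi).abs)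
    rw [π.left, π.right] at h
    exact h.symm
  rw [hsplit, hsplitabs, ← Finset.sum_sub_distrib, Finset.mul_sum]
  refine le_trans (Finset.abs_sum_le_sum_abs _ _) (Finset.sum_le_sum ?_)
  intro i hi
  rw [Finset.mem_range] at hi
  have hmono := π.mono i hi
  have hgi : IntervalIntegrable (fun s => g (v i) * φ s) volume (π.u i) (π.u (i+1)) :=
    (hφint i hi).const_mul _
  rw [← intervalIntegral.integral_const_mul, ← intervalIntegral.integral_sub hgi (hgφint i hi)]
  have key : |∫ s in (π.u i)..(π.u (i+1)), (g (v i) * φ s - g s * φ s)|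
      ≤ ∫ s in (π.u i)..(π.u (i+1)), ε * |φ s| := by
    refine le_trans (intervalIntegral.abs_integral_le_integral_abs hmono) ?_
    refine intervalIntegral.integral_mono_on hmono ((hgi.sub (hgφint i hi)).abs)
      ((hφint i hi).abs.const_mul ε) ?_
    intro s hsmem
    have h1 : |g (v i) - g s| ≤ ε := by
      refine hunif (v i) (hIcc i hi (hv i hi)) s (hIcc i hi hsmem) ?_
      have h2 := π.diff_le_mesh hi
      have := (hv i hi).1; have := (hv i hi).2
      have := hsmem.1; have := hsmem.2
      rw [Real.dist_eq]
      rw [abs_lt]; constructor <;> linarith [hmesh]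
    calc |g (v i) * φ s - g s * φ s| = |g (v i) - g s| * |φ s| := by
            rw [← abs_mul]; ring_nf
      _ ≤ ε * |φ s| := mul_le_mul_of_nonneg_right h1 (abs_nonneg _)
  calc |∫ s in (π.u i)..(π.u (i+1)), (g (v i) * φ s - g s * φ s)|
      ≤ ∫ s in (π.u i)..(π.u (i+1)), ε * |φ s| := key
    _ = ε * ∫ s in (π.u i)..(π.u (i+1)), |φ s| := intervalIntegral.integral_const_mul _ _

open Set in
lemma riemann_tendsto {t : ℝ} (ht : 0 ≤ t) (g φ : ℝ → ℝ)
    (hg : ContinuousOn g (Icc 0 t)) (hφ : ContinuousOn φ (Icc 0 t))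
    (π : ℕ → IntervalPartition 0 t) (hmesh : Tendsto (fun k => (π k).mesh) atTop (𝓝 0))
    (v : ℕ → ℕ → ℝ) (hv : ∀ k, ∀ i < (π k).n, v k i ∈ Icc ((π k).u i) ((π k).u (i+1))) :
    Tendsto (fun k => ∑ i ∈ Finset.range (π k).n,
        g (v k i) * ∫ s in ((π k).u i)..((π k).u (i+1)), φ s) atTop
      (𝓝 (∫ s in (0:ℝ)..t, g s * φ s)) := by
  rw [Metric.tendsto_atTop]
  intro ε hε
  set C : ℝ := ∫ s in (0:ℝ)..t, |φ s| with hC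
  have hC0 : 0 ≤ C :=
    intervalIntegral.integral_nonneg ht (fun s _ => abs_nonneg _)
  set ε' : ℝ := ε / (2 * (C + 1)) with hε'
  have hε'pos : 0 < ε' := by positivity
  obtain ⟨δ, hδpos, hδ⟩ := Metric.uniformContinuousOn_iff.mp
    (isCompact_Icc.uniformContinuousOn_of_continuous hg) ε' hε'pos
  have hev : ∀ᶠ k in atTop, (π k).mesh < δ := by
    have := hmesh.eventually (eventually_lt_nhds (show (0:ℝ) < δ from hδpos))
    simpa using this
  obtain ⟨N, hN⟩ := hev.exists_forall_of_atTop
  refine ⟨N, fun k hk => ?_⟩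
  have hclose := riemann_close g φ hg hφ hδpos
    (fun x hx y hy hxy => by
      have := hδ x hx y hy hxy
      rw [Real.dist_eq] at this
      exact this.le)
    (π k) (hN k hk) (v k) (hv k)
  rw [Real.dist_eq]
  calc |(∑ i ∈ Finset.range (π k).n,
        g (v k i) * ∫ s in ((π k).u i)..((π k).u (i+1)), φ s) - ∫ s in (0:ℝ)..t, g s * φ s|
      ≤ ε' * C := hclose
    _ < ε := by
        rw [hε', div_mul_eq_mul_div, div_lt_iff₀ (by positivity)]
        nlinarith

def unifPart (t : ℝ) (ht : 0 ≤ t) (k : ℕ) : IntervalPartition 0 t where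
  n := k + 1
  npos := Nat.succ_pos k
  u := fun i => t * (min i (k+1) : ℕ) / (k+1)
  left := by simp
  right := by simp only [min_self]; field_simp; push_cast; ring
  mono := by
    intro i _
    have h1 : ((min i (k+1) : ℕ) : ℝ) ≤ ((min (i+1) (k+1) : ℕ) : ℝ) := by
      exact_mod_cast min_le_min (Nat.le_succ i) le_rfl
    show t * _ / _ ≤ t * _ / _
    gcongr

lemma unifPart_mesh_le (t : ℝ) (ht : 0 ≤ t) (k : ℕ) :
    (unifPart t ht k).mesh ≤ t / (k+1) := by
  have : Nonempty (Fin (unifPart t ht k).n) := ⟨⟨0, (unifPart t ht k).npos⟩⟩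
  refine ciSup_le fun i => ?_
  have hi : (i : ℕ) < k + 1 := i.isLt
  have h1 : min (i : ℕ) (k+1) = (i : ℕ) := min_eq_left hi.le
  have h2 : min ((i : ℕ)+1) (k+1) = (i : ℕ)+1 := min_eq_left hi
  show (unifPart t ht k).u (i+1) - (unifPart t ht k).u i ≤ t / (k+1)
  simp only [unifPart, h1, h2]
  rw [div_sub_div_same]
  apply le_of_eq
  congr 1
  push_cast
  ring

lemma unifPart_mesh_tendsto (t : ℝ) (ht : 0 ≤ t) :
    Tendsto (fun k => (unifPart t ht k).mesh) atTop (𝓝 0) := by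
  have h1 : Tendsto (fun k : ℕ => t / (k+1 : ℝ)) atTop (𝓝 0) := by
    apply Tendsto.div_atTop (tendsto_const_nhds)
    exact tendsto_atTop_add_const_right atTop 1 tendsto_natCast_atTop_atTop
  refine tendsto_of_tendsto_of_tendsto_of_le_of_le tendsto_const_nhds h1
    (fun k => (unifPart t ht k).mesh_nonneg) (fun k => ?_)
  exact_mod_cast unifPart_mesh_le t ht k

open Set in
lemma measurable_param_integral {Ω : Type*} [MeasurableSpace Ω] {t : ℝ} (ht : 0 ≤ t)
    (h : ℝ → Ω → ℝ) (hmeas : ∀ s ∈ Icc (0:ℝ) t, Measurable (h s))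
    (hcont : ∀ ω, ContinuousOn (fun s => h s ω) (Icc 0 t)) :
    Measurable fun ω => ∫ s in (0:ℝ)..t, h s ω := by
  apply measurable_of_tendsto_metrizable
    (f := fun k ω => ∑ i ∈ Finset.range (unifPart t ht k).n,
      h ((unifPart t ht k).u i) ω * ((unifPart t ht k).u (i+1) - (unifPart t ht k).u i))
  · intro k
    apply Finset.measurable_sum
    intro i hi
    rw [Finset.mem_range] at hi
    exact (hmeas _ ((unifPart t ht k).u_mem hi.le)).mul_const _
  · rw [tendsto_pi_nhds]
    intro ω
    have key := riemann_tendsto ht (fun s => h s ω) (fun _ => (1:ℝ)) (hcont ω)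
      continuousOn_const (unifPart t ht) (unifPart_mesh_tendsto t ht)
      (fun k i => (unifPart t ht k).u i)
      (fun k i hi => ⟨le_rfl, (unifPart t ht k).mono i hi⟩)
    simpa using key

lemma abel_sum (f b : ℝ → ℝ) {t : ℝ} (π : IntervalPartition 0 t) :
    ∑ i ∈ Finset.range π.n, f (π.u i) * (b (π.u (i+1)) - b (π.u i))
    = f (π.u π.n) * b (π.u π.n) - f (π.u 0) * b (π.u 0)
      - ∑ i ∈ Finset.range π.n, b (π.u (i+1)) * (f (π.u (i+1)) - f (π.u i)) := by
  have htel : ∑ i ∈ Finset.range π.n,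
      (f (π.u (i+1)) * b (π.u (i+1)) - f (π.u i) * b (π.u i))
      = f (π.u π.n) * b (π.u π.n) - f (π.u 0) * b (π.u 0) :=
    Finset.sum_range_sub (fun i => f (π.u i) * b (π.u i)) π.n
  rw [← htel, ← Finset.sum_sub_distrib]
  exact Finset.sum_congr rfl (fun i _ => by ring)

open Set in
lemma contOn_invsq {T c : ℝ} (hc : c < T) :
    ContinuousOn (fun s : ℝ => ((T - s)^2)⁻¹) (Iic c) := by
  apply ContinuousOn.inv₀
  · exact ((continuous_const.sub continuous_id).pow 2).continuousOn
  · intro s hs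
    have h : s < T := lt_of_le_of_lt hs hc
    exact pow_ne_zero 2 (sub_pos.mpr h).ne'

lemma hasDerivAt_inv_T {T s : ℝ} (hs : s < T) :
    HasDerivAt (fun r : ℝ => (T - r)⁻¹) (((T - s)^2)⁻¹) s := by
  have hne : T - s ≠ 0 := (sub_pos.mpr hs).ne'
  have h1 : HasDerivAt (fun r : ℝ => T - r) (-1) s := by
    simpa using (hasDerivAt_id s).const_sub T
  have := h1.inv hne
  refine this.congr_deriv ?_
  simp

open Set in
lemma inv_diff_eq_integral {T x y : ℝ} (hxy : x ≤ y) (hy : y < T) :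
    (T - y)⁻¹ - (T - x)⁻¹ = ∫ s in x..y, ((T - s)^2)⁻¹ := by
  have hsub : uIcc x y ⊆ Iic y := by rw [uIcc_of_le hxy]; exact Icc_subset_Iic_self
  rw [intervalIntegral.integral_eq_sub_of_hasDerivAt
    (fun s hs => hasDerivAt_inv_T (lt_of_le_of_lt (hsub hs).out hy))
    (((contOn_invsq hy).mono hsub).intervalIntegrable)]

open Set in
lemma det_identity {T : ℝ} (hT : 0 < T) {t : ℝ} (ht0 : 0 ≤ t) (htT : t < T)
    (w : ℝ → ℝ) (hw : Continuous w) :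
    w t = w 0 * (1 - t / T) + (T - t) *
      ((T - t)⁻¹ * (w t - w 0 + ∫ s in (0:ℝ)..t, w s / (T - s))
        - ∫ s in (0:ℝ)..t,
            (w s - w 0 + ∫ r in (0:ℝ)..s, w r / (T - r)) * ((T - s)^2)⁻¹) := by
  set A : ℝ → ℝ := fun x => ∫ r in (0:ℝ)..x, w r / (T - r) with hA
  set b : ℝ → ℝ := fun s => w s - w 0 + A s with hb
  have hcont1 : ContinuousOn (fun r => w r / (T - r)) (Iio T) := by
    apply hw.continuousOn.div ((continuous_const.sub continuous_id).continuousOn)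
    intro x hx
    have h : x < T := hx
    exact (sub_pos.mpr h).ne'
  have huIcc : ∀ x : ℝ, x < T → uIcc (0:ℝ) x ⊆ Iio T := by
    intro x hx r hr
    rcases le_total 0 x with h | h
    · rw [uIcc_of_le h] at hr; exact lt_of_le_of_lt hr.2 hx
    · rw [uIcc_of_ge h] at hr; exact lt_of_le_of_lt hr.2 hT
  have hAderiv : ∀ x ∈ Iio T, HasDerivAt A (w x / (T - x)) x := by
    intro x hx
    exact intervalIntegral.integral_hasDerivAt_right
      ((hcont1.mono (huIcc x hx)).intervalIntegrable)
      (hcont1.stronglyMeasurableAtFilter isOpen_Iio x hx)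
      ((hcont1 x hx).continuousAt (Iio_mem_nhds hx))
  have hbcont : ContinuousOn b (Iio T) := by
    apply ((hw.sub continuous_const).continuousOn).add
    intro x hx
    exact ((hAderiv x hx).continuousAt).continuousWithinAt
  have hψcont : ContinuousOn (fun s => b s * ((T - s)^2)⁻¹) (Iio T) := by
    apply hbcont.mul
    apply ContinuousOn.inv₀ (((continuous_const.sub continuous_id).pow 2).continuousOn)
    intro s hs
    exact pow_ne_zero 2 (sub_pos.mpr hs).ne'
  set G : ℝ → ℝ := fun x => ∫ s in (0:ℝ)..x, b s * ((T - s)^2)⁻¹ with hG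
  have hGderiv : ∀ x ∈ Iio T, HasDerivAt G (b x * ((T - x)^2)⁻¹) x := fun x hx =>
    intervalIntegral.integral_hasDerivAt_right
      ((hψcont.mono (huIcc x hx)).intervalIntegrable)
      (hψcont.stronglyMeasurableAtFilter isOpen_Iio x hx)
      ((hψcont x hx).continuousAt (Iio_mem_nhds hx))
  set R : ℝ → ℝ := fun x => A x * (T - x)⁻¹ - w 0 * ((T - x)⁻¹ - T⁻¹) with hR
  have hRderiv : ∀ x ∈ Iio T, HasDerivAt R (b x * ((T - x)^2)⁻¹) x := by
    intro x hx
    have hx' : x < T := hx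
    have hne : T - x ≠ 0 := (sub_pos.mpr hx').ne'
    have h1 : HasDerivAt (fun y => A y * (T - y)⁻¹)
        (w x / (T - x) * (T - x)⁻¹ + A x * ((T - x)^2)⁻¹) x :=
      (hAderiv x hx).mul (hasDerivAt_inv_T hx')
    have h2 : HasDerivAt (fun y => w 0 * ((T - y)⁻¹ - T⁻¹)) (w 0 * ((T - x)^2)⁻¹) x := by
      simpa using (((hasDerivAt_inv_T hx').sub_const T⁻¹).const_mul (w 0))
    have h3 := h1.sub h2
    rw [hR]
    refine h3.congr_deriv ?_
    rw [hb]
    field_simp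
    ring
  have hsubT : ∀ x ∈ Icc (0:ℝ) t, x ∈ Iio T := fun x hx => lt_of_le_of_lt hx.2 htT
  have hGR : ∀ y ∈ Icc (0:ℝ) t, G y = R y := by
    apply eq_of_has_deriv_right_eq (f' := fun x => b x * ((T - x)^2)⁻¹)
    · intro x hx
      exact (hGderiv x (hsubT x ⟨hx.1, hx.2.le⟩)).hasDerivWithinAt
    · intro x hx
      exact (hRderiv x (hsubT x ⟨hx.1, hx.2.le⟩)).hasDerivWithinAt
    · intro x hx
      exact ((hGderiv x (hsubT x hx)).continuousAt).continuousWithinAt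
    · intro x hx
      exact ((hRderiv x (hsubT x hx)).continuousAt).continuousWithinAt
    · rw [hG, hR]
      simp [hA, intervalIntegral.integral_same]
  have hGt := hGR t ⟨ht0, le_rfl⟩
  have hTt : T - t ≠ 0 := (sub_pos.mpr htT).ne'
  have hT0 : (T:ℝ) ≠ 0 := hT.ne'
  have e1 : (∫ s in (0:ℝ)..t, w s / (T - s)) = A t := rfl
  have e2 : (∫ s in (0:ℝ)..t,
      (w s - w 0 + ∫ r in (0:ℝ)..s, w r / (T - r)) * ((T - s)^2)⁻¹) = G t := rfl
  rw [e1, e2, hGt, hR]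
  field_simp
  ring

/-- variation of constants formula for the time-reversed Brownian motion:
`Ŵ(t) = W(T)(1 - t/T) + (T - t) ∫₀ᵗ (T - s)⁻¹ dβ(s)` for `t ∈ [0, T]`, where
`β(t) = Ŵ(t) - W(T) + ∫₀ᵗ Ŵ(s)/(T-s) ds` is a Brownian motion with respect to the
enlarged filtration `H`. -/
theorem variation_of_constants_time_reversal
    {Ω : Type*} [MeasurableSpace Ω] (P : Measure Ω) [IsProbabilityMeasure P]
    (W : ℝ → Ω → ℝ) (hW : IsBrownianMotion P W)
    (T : ℝ) (hT : 0 < T)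
    (β : ℝ → Ω → ℝ)
    (hβ : ∀ t, ∀ ω,
      β t ω = W (T - t) ω - W T ω + ∫ s in (0:ℝ)..t, W (T - s) ω / (T - s))
    (hβBM : IsBMWithRespectTo P T
      (fun t => MeasurableSpace.comap (W T) inferInstance ⊔
        ⨆ u ∈ Set.Icc (0:ℝ) t, MeasurableSpace.comap (β u) inferInstance) β)
    (I : ℝ → Ω → ℝ)
    (hI : ∀ t ∈ Set.Ico (0:ℝ) T,
      IsItoIntegral P (fun s _ => (T - s)⁻¹) β 0 t (I t)) :
    ∀ t ∈ Set.Icc (0:ℝ) T, ∀ᵐ ω ∂P,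
      W (T - t) ω = W T ω * (1 - t / T) + (T - t) * I t ω := by
  intro t ht
  rcases eq_or_lt_of_le ht.2 with heq | hlt
  · refine ae_of_all _ fun ω => ?_
    rw [heq]
    simp [hW.2.1 ω, div_self hT.ne']
  · have ht0 : 0 ≤ t := ht.1
    set π : ℕ → IntervalPartition 0 t := unifPart t ht0 with hπdef
    have hmesh := unifPart_mesh_tendsto t ht0
    have hITt : TendstoInMeasure P (fun k => itoSum (fun s _ => (T - s)⁻¹) β (π k)) atTop (I t) :=
      hI t ⟨ht0, hlt⟩ π hmesh
    set J : Ω → ℝ := fun ω => (T - t)⁻¹ * β t ω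
      - ∫ s in (0:ℝ)..t, β s ω * ((T - s)^2)⁻¹ with hJ
    -- pathwise convergence of the Riemann sums to J
    have hpath : ∀ ω, Tendsto (fun k => itoSum (fun s _ => (T - s)⁻¹) β (π k) ω)
        atTop (𝓝 (J ω)) := by
      intro ω
      have hβc : ContinuousOn (fun s => β s ω) (Set.Icc 0 t) :=
        (hβBM.2.2.1 ω).mono (Set.Icc_subset_Icc le_rfl hlt.le)
      have hφc : ContinuousOn (fun s : ℝ => ((T - s)^2)⁻¹) (Set.Icc 0 t) :=
        (contOn_invsq hlt).mono (fun x hx => hx.2)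
      have hsum := riemann_tendsto ht0 (fun s => β s ω) (fun s => ((T - s)^2)⁻¹) hβc hφc
        π hmesh (fun k i => (π k).u (i+1))
        (fun k i hi => ⟨(π k).mono i hi, le_rfl⟩)
      have heq : ∀ k, itoSum (fun s _ => (T - s)⁻¹) β (π k) ω
          = (T - t)⁻¹ * β t ω - ∑ i ∈ Finset.range (π k).n,
              β ((π k).u (i+1)) ω *
                ∫ s in ((π k).u i)..((π k).u (i+1)), ((T - s)^2)⁻¹ := by
        intro k
        have h1 : itoSum (fun s _ => (T - s)⁻¹) β (π k) ω
            = ∑ i ∈ Finset.range (π k).n, (fun s => (T - s)⁻¹) ((π k).u i) *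
                ((fun s => β s ω) ((π k).u (i+1)) - (fun s => β s ω) ((π k).u i)) := rfl
        rw [h1, abel_sum (fun s => (T - s)⁻¹) (fun s => β s ω) (π k)]
        simp only [(π k).right, (π k).left, hβBM.2.1 ω]
        have h2 : ∀ i ∈ Finset.range (π k).n,
            β ((π k).u (i+1)) ω * ((T - (π k).u (i+1))⁻¹ - (T - (π k).u i)⁻¹)
            = β ((π k).u (i+1)) ω *
                ∫ s in ((π k).u i)..((π k).u (i+1)), ((T - s)^2)⁻¹ := by
          intro i hi
          rw [Finset.mem_range] at hi
          rw [inv_diff_eq_integral ((π k).mono i hi)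
            (lt_of_le_of_lt ((π k).u_mem hi).2 hlt)]
        rw [Finset.sum_congr rfl h2]
        ring
      rw [tendsto_congr heq]
      exact tendsto_const_nhds.sub hsum
    -- measurability of β s for s ∈ [0, t]
    have hcontW : ∀ ω, Continuous fun s : ℝ => W (T - s) ω := fun ω =>
      (hW.2.2.1 ω).comp (continuous_const.sub continuous_id)
    have hβmeas : ∀ s ∈ Set.Icc (0:ℝ) t, Measurable (β s) := by
      intro s hs
      have hfun : β s = fun ω => W (T - s) ω - W T ω
          + ∫ r in (0:ℝ)..s, W (T - r) ω / (T - r) := funext (hβ s)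
      rw [hfun]
      apply ((hW.1 _).sub (hW.1 T)).add
      apply measurable_param_integral hs.1 (fun r ω => W (T - r) ω / (T - r))
      · intro r _
        exact (hW.1 _).div measurable_const
      · intro ω
        apply ((hcontW ω).continuousOn).div
          ((continuous_const.sub continuous_id).continuousOn)
        intro x hx
        have hxT : x < T := lt_of_le_of_lt (hx.2.trans hs.2) hlt
        exact (sub_pos.mpr hxT).ne'
    -- measurability of the Riemann sums
    have hsummeas : ∀ k, AEStronglyMeasurable
        (fun ω => itoSum (fun s _ => (T - s)⁻¹) β (π k) ω) P := by
      intro k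
      apply Measurable.aestronglyMeasurable
      apply Finset.measurable_sum
      intro i hi
      rw [Finset.mem_range] at hi
      exact (((hβmeas _ ((π k).u_mem hi)).sub
        (hβmeas _ ((π k).u_mem hi.le))).const_mul _)
    have hJconv : TendstoInMeasure P (fun k => itoSum (fun s _ => (T - s)⁻¹) β (π k)) atTop J :=
      tendstoInMeasure_of_tendsto_ae hsummeas (ae_of_all _ hpath)
    have hIJ : I t =ᵐ[P] J := tendstoInMeasure_unique hITt hJconv
    filter_upwards [hIJ] with ω hω
    have hdet := det_identity hT ht0 hlt (fun s => W (T - s) ω) (hcontW ω)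
    simp only [sub_zero] at hdet
    rw [hω]
    have hfinal : J ω = (T - t)⁻¹ * (W (T - t) ω - W T ω
        + ∫ s in (0:ℝ)..t, W (T - s) ω / (T - s))
        - ∫ s in (0:ℝ)..t,
            (W (T - s) ω - W T ω + ∫ r in (0:ℝ)..s, W (T - r) ω / (T - r))
              * ((T - s)^2)⁻¹ := by
      rw [hJ]
      simp only [hβ]
    rw [hfinal]
    exact hdet

end
end
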